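/- For any polynomial map p : ℝ^d → ℝ^m with p(0) = 0 given by polynomials p₁,…,p_m, and for every letter i ∈ {1,…,m}, one has M_p(i) = φ_d(p_i), where i denotes the corresponding single-letter word in T(ℝ^m). -/

import Mathlib

noncomputable section

open MeasureTheory

/-- Words in the alphabet `{1,…,d}`. -/
abbrev Word (d : ℕ) := List (Fin d)

/-- `T(ℝ^d)`: the real vector space with basis the words in `{1,…,d}`. -/
abbrev Tens (d : ℕ) := Word d →₀ ℝ

namespace SigPaper

variable {d m s : ℕ}

/-- The basis word `w` as an element of `T(ℝ^d)`. -/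
def wordT (w : Word d) : Tens d := Finsupp.single w 1

/-- The shuffle product of two words. -/
def shuffleWord : Word d → Word d → Tens d
  | [], v => Finsupp.single v 1
  | u, [] => Finsupp.single u 1
  | a :: u, b :: v =>
      Finsupp.mapDomain (fun w => a :: w) (shuffleWord u (b :: v)) +
      Finsupp.mapDomain (fun w => b :: w) (shuffleWord (a :: u) v)
  termination_by u v => u.length + v.length
  decreasing_by all_goals simp +arith +decide

/-- The shuffle product `⧢` on `T(ℝ^d)`, the bilinear extension of the shuffle of words. -/
def shuffle (x y : Tens d) : Tens d :=
  x.sum fun u a => y.sum fun v b => (a * b) • shuffleWord u v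

/-- The operator appending the letter `i` at the end of every word (`T_i^+`). -/
def appendLetter (i : Fin d) (x : Tens d) : Tens d :=
  Finsupp.mapDomain (fun w => w ++ [i]) x

/-- The right half-shuffle of two words: `w ≻ (v∘i) = (w ⧢ v)∘i` (zero if the right word
is empty). -/
def halfShuffleWord (u v : Word d) : Tens d :=
  match v.getLast? with
  | none => 0
  | some i => appendLetter i (shuffleWord u v.dropLast)

/-- The right half-shuffle `≻`, extended bilinearly. -/
def halfShuffle (x y : Tens d) : Tens d :=
  x.sum fun u a => y.sum fun v b => (a * b) • halfShuffleWord u v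

/-- The letter-appending operator `T_i^+`. -/
def Tplus (i : Fin d) : Tens d → Tens d := appendLetter i

/-- `T_i^-` on a word: removes the last letter if it equals `i`, otherwise `0`. -/
def TminusWord (i : Fin d) (w : Word d) : Tens d :=
  match w.getLast? with
  | none => 0
  | some j => if j = i then Finsupp.single w.dropLast 1 else 0

/-- The letter-removing operator `T_i^-`. -/
def Tminus (i : Fin d) (x : Tens d) : Tens d := x.sum fun w a => a • TminusWord i w

/-- The single-letter word `i` in `T(ℝ^d)`. -/
def letterT (i : Fin d) : Tens d := Finsupp.single [i] 1

/-- Shuffle powers `x^{⧢ n}`. -/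
def shufflePow (x : Tens d) : ℕ → Tens d
  | 0 => Finsupp.single [] 1
  | n + 1 => shuffle (shufflePow x n) x

/-- Shuffle product of a list of elements. -/
def shuffleList : List (Tens d) → Tens d
  | [] => Finsupp.single [] 1
  | x :: xs => shuffle x (shuffleList xs)

/-- Image of the monomial `x^t` under `φ_d`: the shuffle product of its letters. -/
def phiMon (t : Fin d →₀ ℕ) : Tens d :=
  shuffleList ((List.finRange d).map fun i => shufflePow (letterT i) (t i))

/-- The embedding `φ_d : ℝ[x₁,…,x_d] → (T(ℝ^d), ⧢)` sending the monomial
`x_{i₁}⋯x_{i_l}` to `i₁ ⧢ ⋯ ⧢ i_l`. -/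
def phi (f : MvPolynomial (Fin d) ℝ) : Tens d :=
  f.support.sum fun t => f.coeff t • phiMon t

/-- A polynomial map `p : ℝ^d → ℝ^m`, given by `m` polynomials in `d` variables. -/
abbrev PolyMap (d m : ℕ) := Fin m → MvPolynomial (Fin d) ℝ

/-- `k_p^{ij} = φ_d(∂p_i/∂x_j) ∈ T(ℝ^d)`. -/
def kP (p : PolyMap d m) (i : Fin m) (j : Fin d) : Tens d :=
  phi (MvPolynomial.pderiv j (p i))

/-- Auxiliary: `M_p` on reversed words, so that `M_p(e) = e` and
`M_p(w∘i) = Σ_j (M_p(w) ⧢ k_p^{ij})∘j`. -/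
def MpRev (p : PolyMap d m) : List (Fin m) → Tens d
  | [] => Finsupp.single [] 1
  | i :: w => ∑ j : Fin d, appendLetter j (shuffle (MpRev p w) (kP p i j))

/-- `M_p` on a word. -/
def MpWord (p : PolyMap d m) (w : Word m) : Tens d := MpRev p w.reverse

/-- The linear map `M_p : T(ℝ^m) → T(ℝ^d)`. -/
def Mp (p : PolyMap d m) (x : Tens m) : Tens d := x.sum fun w a => a • MpWord p w

/-- `X : [0,L] → ℝ^d` is piecewise continuously differentiable: there is a partition
`0 = t₀ ≤ t₁ ≤ ⋯ ≤ t_n = L` such that `X` is `C¹` on each subinterval. -/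
def PiecewiseC1 (X : ℝ → Fin d → ℝ) (L : ℝ) : Prop :=
  ∃ (n : ℕ) (t : Fin (n + 1) → ℝ), Monotone t ∧ t 0 = 0 ∧ t (Fin.last n) = L ∧
    ∀ k : Fin n, ContDiffOn ℝ 1 X (Set.Icc (t k.castSucc) (t k.succ))

/-- Iterated-integral signature coefficients, on reversed words:
`⟨σ(X|_{[0,t]}), w∘i⟩ = ∫_0^t ⟨σ(X|_{[0,r]}), w⟩ Ẋ^i_r dr`. -/
def sigRev (X : ℝ → Fin d → ℝ) : List (Fin d) → ℝ → ℝ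
  | [], _ => 1
  | i :: w, t => ∫ r in (0:ℝ)..t, sigRev X w r * deriv (fun u => X u i) r

/-- `⟨σ(X|_{[0,L]}), w⟩`, the signature coefficient of the word `w`. -/
def sigWord (X : ℝ → Fin d → ℝ) (L : ℝ) (w : Word d) : ℝ := sigRev X w.reverse L

/-- The pairing `⟨σ(X|_{[0,L]}), x⟩` for `x ∈ T(ℝ^d)`. -/
def sigT (X : ℝ → Fin d → ℝ) (L : ℝ) (x : Tens d) : ℝ :=
  x.sum fun w a => a * sigWord X L w

/-- The transformed path `p(X) : t ↦ p(X(t))`. -/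
def pPath (p : PolyMap d m) (X : ℝ → Fin d → ℝ) : ℝ → Fin m → ℝ :=
  fun t i => MvPolynomial.eval (X t) (p i)

/-- The translated polynomial map `p̃(y) = p(y + x₀) − p(x₀)`, satisfying `p̃(0) = 0`. -/
def ptilde (p : PolyMap d m) (x0 : Fin d → ℝ) : PolyMap d m := fun i =>
  MvPolynomial.aeval (fun j => MvPolynomial.X j + MvPolynomial.C (x0 j)) (p i) -
    MvPolynomial.C (MvPolynomial.eval x0 (p i))

/-- The pairing `⟨exp_∘(L·𝟙), x⟩` for `x ∈ T(ℝ¹)`: the coefficient of the word of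
length `n` in `exp_∘(L·𝟙)` is `Lⁿ/n!`. -/
def expPair (L : ℝ) (x : Tens 1) : ℝ :=
  x.sum fun w a => a * (L ^ w.length / (w.length.factorial : ℝ))

/-- The pairing `⟨σ(X) ∘ σ(Y), x⟩` of the concatenation product of two signatures with
`x ∈ T(ℝ^d)`: on a word `w` it is `Σ_{u∘v = w} ⟨σ(X), u⟩·⟨σ(Y), v⟩`. -/
def concatPair (X Y : ℝ → Fin d → ℝ) (L : ℝ) (x : Tens d) : ℝ :=
  x.sum fun w a =>
    a * ∑ k ∈ Finset.range (w.length + 1), sigWord X L (w.take k) * sigWord Y L (w.drop k)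


lemma shuffleWord_nil_left (v : Word d) : shuffleWord [] v = Finsupp.single v 1 := by
  simp [shuffleWord]

lemma shuffleWord_nil_right (u : Word d) : shuffleWord u [] = Finsupp.single u 1 := by
  cases u <;> simp [shuffleWord]

lemma shuffleWord_cons (a b : Fin d) (u v : Word d) : shuffleWord (a::u) (b::v) =
      Finsupp.mapDomain (fun w => a :: w) (shuffleWord u (b :: v)) +
      Finsupp.mapDomain (fun w => b :: w) (shuffleWord (a :: u) v) := by rw [shuffleWord]

lemma mapDomain_cons_append (a b : Fin d) (x : Tens d) :
    Finsupp.mapDomain (fun w : Word d => a :: w) (Finsupp.mapDomain (fun w => w ++ [b]) x)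
      = Finsupp.mapDomain (fun w : Word d => w ++ [b]) (Finsupp.mapDomain (fun w => a :: w) x) := by
  rw [← Finsupp.mapDomain_comp, ← Finsupp.mapDomain_comp]; rfl

theorem shuffleWord_concat :
    ∀ (u v : Word d) (a b : Fin d),
      shuffleWord (u ++ [a]) (v ++ [b]) =
        Finsupp.mapDomain (fun w => w ++ [a]) (shuffleWord u (v ++ [b])) +
        Finsupp.mapDomain (fun w => w ++ [b]) (shuffleWord (u ++ [a]) v)
  | [], [], a, b => by
      simp [shuffleWord, Finsupp.mapDomain_single, add_comm]
  | [], c :: v', a, b => by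
      have IH := shuffleWord_concat [] v' a b
      simp only [List.nil_append] at IH ⊢
      rw [List.cons_append, shuffleWord_cons, shuffleWord_cons, IH,
        shuffleWord_nil_left, shuffleWord_nil_left]
      simp only [Finsupp.mapDomain_add, Finsupp.mapDomain_single, mapDomain_cons_append,
        shuffleWord_nil_left, shuffleWord_nil_right, List.cons_append, List.append_assoc]
      abel
  | c :: u', [], a, b => by
      have IH := shuffleWord_concat u' [] a b
      simp only [List.nil_append] at IH ⊢
      rw [List.cons_append, shuffleWord_cons, shuffleWord_cons, IH,
        shuffleWord_nil_right, shuffleWord_nil_right]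
      simp only [Finsupp.mapDomain_add, Finsupp.mapDomain_single, mapDomain_cons_append,
        shuffleWord_nil_left, shuffleWord_nil_right, List.cons_append, List.append_assoc]
      abel
  | c :: u', e :: v', a, b => by
      have IH1 := shuffleWord_concat u' (e :: v') a b
      have IH2 := shuffleWord_concat (c :: u') v' a b
      rw [List.cons_append, List.cons_append, shuffleWord_cons, ← List.cons_append,
        ← List.cons_append, IH1, IH2, List.cons_append (a := e), shuffleWord_cons,
        List.cons_append (a := c), shuffleWord_cons]
      simp only [Finsupp.mapDomain_add, Finsupp.mapDomain_single, mapDomain_cons_append,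
        List.cons_append]
      abel
  termination_by u v => u.length + v.length
  decreasing_by all_goals simp +arith +decide
-- shuffle bilinearity
lemma shuffle_def (x y : Tens d) : shuffle x y =
    x.sum fun u a => y.sum fun v b => (a * b) • shuffleWord u v := rfl

lemma shuffle_zero_left (y : Tens d) : shuffle 0 y = 0 := by simp [shuffle_def]

lemma shuffle_zero_right (x : Tens d) : shuffle x 0 = 0 := by simp [shuffle_def]

lemma shuffle_single_single (u v : Word d) (a b : ℝ) :
    shuffle (Finsupp.single u a) (Finsupp.single v b) = (a * b) • shuffleWord u v := by
  rw [shuffle_def, Finsupp.sum_single_index, Finsupp.sum_single_index]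
  · simp
  · simp [Finsupp.sum_single_index]

lemma shuffle_add_left (x x' y : Tens d) :
    shuffle (x + x') y = shuffle x y + shuffle x' y := by
  rw [shuffle_def, shuffle_def, shuffle_def, Finsupp.sum_add_index]
  · intro u _; simp
  · intro u _ a a'
    rw [← Finsupp.sum_add]
    congr 1; ext v b; rw [add_mul, add_smul]

lemma shuffle_add_right (x y y' : Tens d) :
    shuffle x (y + y') = shuffle x y + shuffle x y' := by
  rw [shuffle_def, shuffle_def, shuffle_def, ← Finsupp.sum_add]
  congr 1; ext u a
  rw [Finsupp.sum_add_index]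
  · intro v _; simp
  · intro v _ b b'; rw [mul_add, add_smul]

lemma shuffle_smul_left (c : ℝ) (x y : Tens d) :
    shuffle (c • x) y = c • shuffle x y := by
  rw [shuffle_def, shuffle_def, Finsupp.sum_smul_index (fun u => by simp), Finsupp.smul_sum]
  refine Finsupp.sum_congr fun u _ => ?_
  rw [Finsupp.smul_sum]
  exact Finsupp.sum_congr fun v _ => by rw [smul_smul, mul_assoc]

lemma shuffle_smul_right (c : ℝ) (x y : Tens d) :
    shuffle x (c • y) = c • shuffle x y := by
  rw [shuffle_def, shuffle_def, Finsupp.smul_sum]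
  refine Finsupp.sum_congr fun u _ => ?_
  rw [Finsupp.sum_smul_index (fun v => by simp), Finsupp.smul_sum]
  exact Finsupp.sum_congr fun v _ => by rw [smul_smul, mul_left_comm]

lemma shuffle_empty_left (x : Tens d) : shuffle (Finsupp.single [] 1) x = x := by
  rw [shuffle_def, Finsupp.sum_single_index]
  · simp only [one_mul, shuffleWord_nil_left, Finsupp.smul_single, smul_eq_mul, mul_one]
    exact Finsupp.sum_single x
  · simp

lemma shuffle_empty_right (x : Tens d) : shuffle x (Finsupp.single [] 1) = x := by
  rw [shuffle_def]
  have h : (x.sum fun u a => (Finsupp.single ([] : Word d) (1:ℝ)).sum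
      fun v b => (a * b) • shuffleWord u v) = x.sum fun u a => Finsupp.single u a := by
    refine Finsupp.sum_congr fun u _ => ?_
    rw [Finsupp.sum_single_index (by simp)]
    simp [shuffleWord_nil_right, Finsupp.smul_single]
  rw [h, Finsupp.sum_single]
-- Tminus lemmas
lemma TminusWord_nil (j : Fin d) : TminusWord j ([] : Word d) = 0 := rfl

lemma TminusWord_concat (j c : Fin d) (w : Word d) :
    TminusWord j (w ++ [c]) = if c = j then Finsupp.single w 1 else 0 := by
  simp [TminusWord, List.getLast?_concat]

lemma Tminus_single (j : Fin d) (w : Word d) (a : ℝ) :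
    Tminus j (Finsupp.single w a) = a • TminusWord j w :=
  Finsupp.sum_single_index (by simp)

lemma Tminus_add (j : Fin d) (x y : Tens d) :
    Tminus j (x + y) = Tminus j x + Tminus j y :=
  Finsupp.sum_add_index (fun _ _ => by simp) (fun _ _ a a' => add_smul a a' _)

lemma Tminus_smul (j : Fin d) (c : ℝ) (x : Tens d) :
    Tminus j (c • x) = c • Tminus j x := by
  unfold Tminus
  rw [Finsupp.sum_smul_index (fun w => by simp), Finsupp.smul_sum]
  exact Finsupp.sum_congr fun w _ => (smul_smul c (x w) _).symm

lemma Tminus_appendLetter (j c : Fin d) (x : Tens d) :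
    Tminus j (Finsupp.mapDomain (fun w : Word d => w ++ [c]) x) =
      if c = j then x else 0 := by
  unfold Tminus
  rw [Finsupp.sum_mapDomain_index (fun _ => by simp) (fun _ a a' => add_smul a a' _)]
  have h : (x.sum fun w a => a • TminusWord j (w ++ [c])) =
      x.sum fun w a => if c = j then Finsupp.single w a else 0 := by
    refine Finsupp.sum_congr fun w _ => ?_
    rw [TminusWord_concat]
    split_ifs <;> simp [Finsupp.smul_single]
  rw [h]
  split_ifs with hc
  · exact Finsupp.sum_single x
  · exact Finset.sum_const_zero

lemma Tminus_shuffleWord (j : Fin d) (u v : Word d) :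
    Tminus j (shuffleWord u v) =
      shuffle (TminusWord j u) (wordT v) + shuffle (wordT u) (TminusWord j v) := by
  rcases u.eq_nil_or_concat with rfl | ⟨u', a, rfl⟩
  · rcases v.eq_nil_or_concat with rfl | ⟨v', b, rfl⟩
    · rw [shuffleWord_nil_left, Tminus_single, TminusWord_nil, shuffle_zero_left,
        shuffle_zero_right, smul_zero, zero_add]
    · simp only [List.concat_eq_append]
      rw [shuffleWord_nil_left, Tminus_single, TminusWord_nil, shuffle_zero_left,
        TminusWord_concat, zero_add, one_smul]
      split_ifs
      · rw [show wordT ([] : Word d) = Finsupp.single [] 1 from rfl, shuffle_empty_left]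
      · rw [shuffle_zero_right]
  · simp only [List.concat_eq_append]
    rcases v.eq_nil_or_concat with rfl | ⟨v', b, rfl⟩
    · rw [shuffleWord_nil_right, Tminus_single, TminusWord_nil, shuffle_zero_right,
        TminusWord_concat, add_zero, one_smul]
      split_ifs
      · rw [show wordT ([] : Word d) = Finsupp.single [] 1 from rfl, shuffle_empty_right]
      · rw [shuffle_zero_left]
    · simp only [List.concat_eq_append]
      rw [shuffleWord_concat, Tminus_add, Tminus_appendLetter, Tminus_appendLetter,
        TminusWord_concat, TminusWord_concat]
      unfold wordT
      split_ifs <;>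
        simp [shuffle_single_single, shuffle_zero_left, shuffle_zero_right]
lemma Tminus_zero (j : Fin d) : Tminus j (0 : Tens d) = 0 := Finsupp.sum_zero_index

lemma Tminus_shuffle (j : Fin d) (x y : Tens d) :
    Tminus j (shuffle x y) = shuffle (Tminus j x) y + shuffle x (Tminus j y) := by
  induction x using Finsupp.induction_linear with
  | zero => simp [shuffle_zero_left, Tminus_zero]
  | add f g hf hg =>
      rw [shuffle_add_left, Tminus_add, hf, hg, Tminus_add, shuffle_add_left,
        shuffle_add_left]
      abel
  | single u a =>
      induction y using Finsupp.induction_linear with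
      | zero => simp [shuffle_zero_right, Tminus_zero]
      | add f g hf hg =>
          rw [shuffle_add_right, Tminus_add, hf, hg, Tminus_add, shuffle_add_right,
            shuffle_add_right]
          abel
      | single v b =>
          have hu : Finsupp.single u a = a • wordT u := by
            simp [wordT, Finsupp.smul_single]
          have hv : Finsupp.single v b = b • wordT v := by
            simp [wordT, Finsupp.smul_single]
          rw [shuffle_single_single, Tminus_smul, Tminus_shuffleWord, Tminus_single,
            Tminus_single, hu, hv, shuffle_smul_left, shuffle_smul_right,
            shuffle_smul_left, shuffle_smul_right, smul_add]
          simp only [smul_smul]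

lemma Tminus_letterT (i j : Fin d) :
    Tminus j (letterT i) = if i = j then Finsupp.single [] 1 else 0 := by
  rw [letterT, Tminus_single, show ([i] : Word d) = [] ++ [i] from rfl, TminusWord_concat]
  split_ifs <;> simp

lemma Tminus_shufflePow (i j : Fin d) (n : ℕ) :
    Tminus j (shufflePow (letterT i) n) =
      if i = j then (n : ℝ) • shufflePow (letterT i) (n - 1) else 0 := by
  induction n with
  | zero =>
      simp [shufflePow, Tminus_single, TminusWord_nil]
  | succ n ih =>
      rw [shufflePow, Tminus_shuffle, ih, Tminus_letterT]
      split_ifs with h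
      · rw [shuffle_smul_left, shuffle_empty_right]
        cases n with
        | zero => simp [shufflePow]
        | succ m =>
            rw [Nat.add_sub_cancel, Nat.add_sub_cancel, ← shufflePow]
            push_cast
            module
      · simp [shuffle_zero_left, shuffle_zero_right]

lemma shuffleList_cons (x : Tens d) (xs : List (Tens d)) :
    shuffleList (x :: xs) = shuffle x (shuffleList xs) := rfl

lemma Tminus_shuffleList_aux (j : Fin d) (F G : Fin d → Tens d) (c : ℝ)
    (h1 : ∀ i, i ≠ j → Tminus j (F i) = 0) (h2 : ∀ i, i ≠ j → G i = F i)
    (h3 : Tminus j (F j) = c • G j) :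
    ∀ l : List (Fin d), l.Nodup →
      Tminus j (shuffleList (l.map F)) =
        if j ∈ l then c • shuffleList (l.map G) else 0
  | [], _ => by simp [shuffleList, Tminus_single, TminusWord_nil]
  | a :: l, hnd => by
      obtain ⟨hal, hl⟩ := List.nodup_cons.mp hnd
      rw [List.map_cons, shuffleList_cons, Tminus_shuffle,
        Tminus_shuffleList_aux j F G c h1 h2 h3 l hl]
      by_cases ha : a = j
      · subst ha
        rw [if_neg hal, shuffle_zero_right, add_zero, h3, shuffle_smul_left,
          if_pos (List.mem_cons_self (a := a) (l := l))]
        have hm : l.map F = l.map G :=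
          List.map_congr_left fun i hi => (h2 i fun he => hal (he ▸ hi)).symm
        rw [hm, List.map_cons, shuffleList_cons]
      · rw [h1 a ha, shuffle_zero_left, zero_add]
        by_cases hjl : j ∈ l
        · rw [if_pos hjl, shuffle_smul_right, if_pos (List.mem_cons_of_mem _ hjl),
            List.map_cons, shuffleList_cons, h2 a ha]
        · rw [if_neg hjl, shuffle_zero_right, if_neg (by simp [Ne.symm ha, hjl])]

lemma Tminus_phiMon (j : Fin d) (t : Fin d →₀ ℕ) :
    Tminus j (phiMon t) = (t j : ℝ) • phiMon (t - Finsupp.single j 1) := by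
  have h := Tminus_shuffleList_aux j (fun i => shufflePow (letterT i) (t i))
      (fun i => shufflePow (letterT i) ((t - Finsupp.single j 1 : Fin d →₀ ℕ) i)) (t j)
      (fun i hi => by rw [Tminus_shufflePow, if_neg hi])
      (fun i hi => by simp only [Finsupp.tsub_apply, Finsupp.single_apply,
        if_neg (Ne.symm hi), Nat.sub_zero])
      (by simp [Tminus_shufflePow, Finsupp.tsub_apply, Finsupp.single_apply])
      (List.finRange d) (List.nodup_finRange d)
  rw [phiMon, h, if_pos (List.mem_finRange j)]
  rfl
lemma decomp (x : Tens d) :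
    x = (x []) • Finsupp.single [] 1 +
      ∑ j : Fin d, Finsupp.mapDomain (fun w : Word d => w ++ [j]) (Tminus j x) := by
  induction x using Finsupp.induction_linear with
  | zero => simp [Tminus_zero]
  | add f g hf hg =>
      conv_lhs => rw [hf, hg]
      simp only [Finsupp.add_apply, Tminus_add, Finsupp.mapDomain_add, add_smul,
        Finset.sum_add_distrib]
      abel
  | single w a =>
      rcases w.eq_nil_or_concat with rfl | ⟨v, c, rfl⟩
      · simp [Tminus_single, TminusWord_nil, Finsupp.smul_single]
      · simp only [List.concat_eq_append]
        have h0 : Finsupp.single (v ++ [c]) a ([] : Word d) = 0 := by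
          simp [Finsupp.single_apply]
        have hterm : ∀ j : Fin d,
            Finsupp.mapDomain (fun w : Word d => w ++ [j])
              (Tminus j (Finsupp.single (v ++ [c]) a)) =
            if c = j then Finsupp.single (v ++ [c]) a else 0 := by
          intro j
          rw [Tminus_single, TminusWord_concat]
          split_ifs with h
          · subst h; simp [Finsupp.smul_single, Finsupp.mapDomain_single]
          · simp
        rw [h0, zero_smul, zero_add, Finset.sum_congr rfl fun j _ => hterm j,
          Finset.sum_ite_eq]
        simp

-- apply-at-nil lemmas
lemma shuffleWord_apply_nil (u v : Word d) :
    shuffleWord u v ([] : Word d) =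
      (if u = [] then 1 else 0) * (if v = [] then 1 else 0) := by
  match u, v with
  | [], v => simp [shuffleWord_nil_left, Finsupp.single_apply, eq_comm]
  | a :: u, [] => simp [shuffleWord_nil_right, Finsupp.single_apply]
  | a :: u, b :: v =>
      rw [shuffleWord_cons, Finsupp.add_apply,
        Finsupp.mapDomain_notin_range _ _ (by simp),
        Finsupp.mapDomain_notin_range _ _ (by simp)]
      simp

lemma shuffle_apply_nil (x y : Tens d) :
    shuffle x y ([] : Word d) = x [] * y [] := by
  rw [shuffle_def, Finsupp.sum_apply]
  have inner : ∀ (u : Word d) (a : ℝ),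
      ((y.sum fun v b => (a * b) • shuffleWord u v) ([] : Word d)) =
        (if u = [] then a else 0) * y [] := by
    intro u a
    rw [Finsupp.sum_apply]
    have h2 : (y.sum fun v b => ((a * b) • shuffleWord u v) ([] : Word d)) =
        y.sum fun v b => (if u = [] then a else 0) * (if v = [] then b else 0) := by
      refine Finsupp.sum_congr fun v _ => ?_
      rw [Finsupp.smul_apply, shuffleWord_apply_nil]
      split_ifs <;> simp
    rw [h2, ← Finsupp.mul_sum, Finsupp.sum_ite_self_eq', mul_comm]
  rw [Finsupp.sum_congr (g2 := fun u a => (if u = [] then a else 0) * y []) fun u _ => inner u (x u), ← Finsupp.sum_mul,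
    Finsupp.sum_ite_self_eq']
lemma letterT_apply_nil (i : Fin d) : letterT i ([] : Word d) = 0 := by
  simp [letterT, Finsupp.single_apply]

lemma shufflePow_apply_nil (i : Fin d) (n : ℕ) :
    shufflePow (letterT i) n ([] : Word d) = if n = 0 then 1 else 0 := by
  cases n with
  | zero => simp [shufflePow]
  | succ n => rw [shufflePow, shuffle_apply_nil, letterT_apply_nil, mul_zero]; simp

lemma shuffleList_apply_nil (L : List (Tens d)) :
    shuffleList L ([] : Word d) = (L.map fun x => x ([] : Word d)).prod := by
  induction L with
  | nil => simp [shuffleList]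
  | cons x xs ih => rw [shuffleList_cons, shuffle_apply_nil, ih, List.map_cons,
      List.prod_cons]

lemma phiMon_apply_nil (t : Fin d →₀ ℕ) :
    phiMon t ([] : Word d) = if t = 0 then 1 else 0 := by
  rw [phiMon, shuffleList_apply_nil, List.map_map]
  split_ifs with h
  · subst h
    apply List.prod_eq_one
    intro a ha
    obtain ⟨i, _, rfl⟩ := List.mem_map.mp ha
    simp [Function.comp, shufflePow_apply_nil]
  · obtain ⟨i, hi⟩ : ∃ i, t i ≠ 0 := by
      by_contra hc
      push_neg at hc
      exact h (Finsupp.ext fun i => hc i)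
    apply List.prod_eq_zero
    refine List.mem_map.mpr ⟨i, List.mem_finRange i, ?_⟩
    simp [Function.comp, shufflePow_apply_nil, hi]

-- phi lemmas
lemma phi_zero : phi (0 : MvPolynomial (Fin d) ℝ) = 0 := by
  simp [phi]

lemma phi_eq (f : MvPolynomial (Fin d) ℝ) :
    phi f = Finsupp.sum (AddMonoidAlgebra.coeff f) fun t c => c • phiMon t := rfl

lemma phi_add (f g : MvPolynomial (Fin d) ℝ) : phi (f + g) = phi f + phi g := by
  rw [phi_eq, phi_eq, phi_eq, AddMonoidAlgebra.coeff_add]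
  exact Finsupp.sum_add_index (fun _ _ => by simp) (fun _ _ a a' => add_smul a a' _)

lemma phi_monomial (t : Fin d →₀ ℕ) (c : ℝ) :
    phi (MvPolynomial.monomial t c) = c • phiMon t := by
  unfold phi
  by_cases h : c = 0
  · subst h; simp [MvPolynomial.support_monomial]
  · rw [MvPolynomial.support_monomial, if_neg h, Finset.sum_singleton,
      MvPolynomial.coeff_monomial, if_pos rfl]

lemma phi_apply_nil (q : MvPolynomial (Fin d) ℝ) :
    phi q ([] : Word d) = MvPolynomial.coeff 0 q := by
  unfold phi
  rw [Finset.sum_apply']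
  have h : ∀ t ∈ q.support, (q.coeff t • phiMon t) ([] : Word d) =
      if t = 0 then q.coeff t else 0 := by
    intro t _
    rw [Finsupp.smul_apply, phiMon_apply_nil]
    split_ifs <;> simp
  rw [Finset.sum_congr rfl h, Finset.sum_ite_eq' q.support 0 fun t => q.coeff t]
  split_ifs with h0
  · rfl
  · exact (MvPolynomial.notMem_support_iff.mp h0).symm

lemma Tminus_phi (j : Fin d) (q : MvPolynomial (Fin d) ℝ) :
    Tminus j (phi q) = phi (MvPolynomial.pderiv j q) := by
  have hq : MvPolynomial.pderiv j q =
      q.support.sum fun t =>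
        MvPolynomial.monomial (t - Finsupp.single j 1) (q.coeff t * t j) := by
    conv_lhs => rw [q.as_sum]
    rw [map_sum]
    exact Finset.sum_congr rfl fun t _ => MvPolynomial.pderiv_monomial
  rw [hq, show phi (q.support.sum fun t =>
        MvPolynomial.monomial (t - Finsupp.single j 1) (q.coeff t * t j)) =
      q.support.sum fun t => phi (MvPolynomial.monomial (t - Finsupp.single j 1)
        (q.coeff t * t j)) from map_sum (AddMonoidHom.mk' phi phi_add) _ _,
    show phi q = q.support.sum fun t => q.coeff t • phiMon t from rfl,
    show Tminus j (q.support.sum fun t => q.coeff t • phiMon t) =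
      q.support.sum fun t => Tminus j (q.coeff t • phiMon t) from
    map_sum (AddMonoidHom.mk' (Tminus j) (Tminus_add j)) _ _]
  refine Finset.sum_congr rfl fun t _ => ?_
  rw [Tminus_smul, Tminus_phiMon, phi_monomial, smul_smul]

/-- For any polynomial map `p` with `p(0) = 0` and every letter `i`,
`M_p(i) = φ_d(p_i)`. -/
theorem Mp_letter (d m : ℕ) (p : PolyMap d m)
    (hp : ∀ i, MvPolynomial.eval (0 : Fin d → ℝ) (p i) = 0) :
    ∀ i : Fin m, Mp p (wordT [i]) = phi (p i) := by
  intro i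
  have h1 : Mp p (wordT [i]) = MpWord p [i] := by
    unfold Mp wordT
    rw [Finsupp.sum_single_index (by simp)]
    exact one_smul _ _
  have h2 : MpWord p [i] =
      ∑ j : Fin d, appendLetter j (phi (MvPolynomial.pderiv j (p i))) := by
    unfold MpWord
    rw [List.reverse_singleton]
    show (∑ j : Fin d, appendLetter j (shuffle (MpRev p []) (kP p i j))) = _
    refine Finset.sum_congr rfl fun j _ => ?_
    rw [show MpRev p ([] : List (Fin m)) = Finsupp.single [] 1 from rfl,
      shuffle_empty_left, kP]
  have hc : MvPolynomial.coeff 0 (p i) = 0 := by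
    have h := hp i
    rw [MvPolynomial.eval_zero] at h
    exact h
  rw [h1, h2]
  conv_rhs => rw [decomp (phi (p i))]
  rw [phi_apply_nil, hc, zero_smul, zero_add]
  exact Finset.sum_congr rfl fun j _ => by rw [Tminus_phi]; rfl

end SigPaper
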